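/- Under the standing assumptions (complete doubling uniformly perfect (X,d), net system with parameters (c*, C*, r), r ∈ (0,r₀], map π satisfying (T1)–(T5) with (r₀/(1−r₀))·α₁ < min(α₂, α₃ − C*)), if B(x_{k,n}, α₃ r^k) ∩ B(x_{k,o}, α₃ r^k) ≠ ∅, then K_{k,n} ∩ K_{k,o} ≠ ∅. -/
import Mathlib


open Metric Set

/-- A metric space is *doubling* if there is `N` such that every ball of radius `2R`
is covered by `N` balls of radius `R`. -/
def Doubling (X : Type*) [PseudoMetricSpace X] : Prop :=
  ∃ N : ℕ, ∀ (x : X) (R : ℝ), ∃ c : Fin N → X,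
    ball x (2 * R) ⊆ ⋃ i, ball (c i) R

/-- A metric space is *uniformly perfect* if there is `γ > 1` such that
`B(x,γR) \ B(x,R) ≠ ∅` whenever `B(x,R) ≠ X`. -/
def UniformlyPerfect (X : Type*) [PseudoMetricSpace X] : Prop :=
  ∃ γ : ℝ, 1 < γ ∧ ∀ (x : X) (R : ℝ), 0 < R → ball x R ≠ univ →
    (ball x (γ * R) \ ball x R).Nonempty

/-- A family of points `x (k, n)` (for `(k, n) ∈ I`, where `(k, n) ∈ I` represents
`ω = (k,n) ∈ Ω_k`) is a *net system with parameters `(c*, C*, r)`*: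
(c) points on level `k` are `c* r^k`-separated, and
(C) every point of `X` is within distance `< C* r^k` of some level-`k` point. -/
structure IsNetSystem {X : Type*} [PseudoMetricSpace X] (cstar Cstar r : ℝ)
    (I : Set (ℤ × ℕ)) (x : ℤ × ℕ → X) : Prop where
  separated : ∀ (k : ℤ) (n m : ℕ), (k, n) ∈ I → (k, m) ∈ I → n ≠ m →
    cstar * r ^ k ≤ dist (x (k, n)) (x (k, m))
  covering : ∀ (y : X) (k : ℤ), ∃ n : ℕ, (k, n) ∈ I ∧ dist y (x (k, n)) < Cstar * r ^ k

/-- The conditions (T1)–(T5) for a map `π : Ω → Ω` relative to a net system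
`(I, x)` with parameters `(c*, C*, r)` and constants `α₁, α₂, α₃`. -/
structure SatisfiesT {X : Type*} [PseudoMetricSpace X] (Cstar r α₁ α₂ α₃ : ℝ)
    (I : Set (ℤ × ℕ)) (x : ℤ × ℕ → X) (π : ℤ × ℕ → ℤ × ℕ) : Prop where
  /-- `π` maps level `k+1` into level `k` (part of (T1)). -/
  maps_into : ∀ (k : ℤ) (m : ℕ), (k + 1, m) ∈ I →
    π (k + 1, m) ∈ I ∧ (π (k + 1, m)).1 = k
  /-- `π(Ω_{k+1}) = Ω_k` (part of (T1)). -/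
  surj : ∀ (k : ℤ) (n : ℕ), (k, n) ∈ I →
    ∃ m : ℕ, (k + 1, m) ∈ I ∧ π (k + 1, m) = (k, n)
  /-- `sup_ω #π⁻¹(ω) < ∞` (part of (T1)). -/
  fiber_bound : ∃ B : ℕ, ∀ ω : ℤ × ℕ,
    {lam | lam ∈ I ∧ π lam = ω}.Finite ∧ {lam | lam ∈ I ∧ π lam = ω}.ncard ≤ B
  /-- (T2) -/
  T2 : ∀ (k : ℤ) (m : ℕ), (k + 1, m) ∈ I →
    dist (x (k + 1, m)) (x (π (k + 1, m))) < α₁ * r ^ k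
  /-- (T3) -/
  T3 : ∀ (k : ℤ) (n m : ℕ), (k, n) ∈ I → (k + 1, m) ∈ I →
    dist (x (k, n)) (x (k + 1, m)) < α₂ * r ^ k → π (k + 1, m) = (k, n)
  /-- (T4) -/
  T4 : ∀ (k : ℤ) (n₁ n₂ : ℕ), (k, n₁) ∈ I → (k, n₂) ∈ I →
    (ball (x (k, n₁)) (α₃ * r ^ k) ∩ ball (x (k, n₂)) (α₃ * r ^ k)).Nonempty →
    ∃ m₁ m₂ : ℕ, (k + 1, m₁) ∈ I ∧ (k + 1, m₂) ∈ I ∧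
      (ball (x (k + 1, m₁)) (α₃ * r ^ (k + 1)) ∩
        ball (x (k + 1, m₂)) (α₃ * r ^ (k + 1))).Nonempty ∧
      π (k + 1, m₁) = (k, n₁) ∧ π (k + 1, m₂) = (k, n₂)
  /-- (T5) -/
  T5 : ∀ (k : ℤ) (m₁ n : ℕ), (k + 1, m₁) ∈ I → (k, n) ∈ I →
    Cstar * r ^ k ≤ dist (x (k + 1, m₁)) (x (π (k + 1, m₁))) →
    dist (x (k + 1, m₁)) (x (k, n)) < α₃ * r ^ k →
    ∃ m₂ m₃ : ℕ, (k + 1, m₂) ∈ I ∧ (k + 1, m₃) ∈ I ∧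
      (ball (x (k + 1, m₂)) (α₃ * r ^ (k + 1)) ∩
        ball (x (k + 1, m₃)) (α₃ * r ^ (k + 1))).Nonempty ∧
      π (k + 1, m₂) = π (k + 1, m₁) ∧ π (k + 1, m₃) = (k, n)

/-- `K_ω`: the closure of `⋃_{l ≥ 0} {x_λ : λ ∈ π^{-l}(ω)}`. -/
def Kset {X : Type*} [PseudoMetricSpace X] (I : Set (ℤ × ℕ)) (x : ℤ × ℕ → X)
    (π : ℤ × ℕ → ℤ × ℕ) (ω : ℤ × ℕ) : Set X :=
  closure (⋃ l : ℕ, x '' {lam | lam ∈ I ∧ π^[l] lam = ω})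

/-- Lemma: if the `α₃ r^k`-balls around `x_{k,n}` and `x_{k,o}` intersect, then
`K_{k,n} ∩ K_{k,o} ≠ ∅`. -/
theorem Kset_kiss
    {X : Type*} [MetricSpace X] [CompleteSpace X]
    (hD : Doubling X) (hUP : UniformlyPerfect X)
    (cstar Cstar α₁ α₂ α₃ r₀ r : ℝ) (hc : 0 < cstar) (hcC : cstar < Cstar)
    (hα₁ : 0 < α₁) (hα₂ : 0 < α₂) (hα₃ : 0 < α₃)
    (hr₀0 : 0 < r₀) (hr₀1 : r₀ < 1)
    (hcond : r₀ / (1 - r₀) * α₁ < min α₂ (α₃ - Cstar))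
    (hr0 : 0 < r) (hrr₀ : r ≤ r₀)
    (I : Set (ℤ × ℕ)) (x : ℤ × ℕ → X) (hnet : IsNetSystem cstar Cstar r I x)
    (π : ℤ × ℕ → ℤ × ℕ) (hπ : SatisfiesT Cstar r α₁ α₂ α₃ I x π)
    :
    ∀ (k : ℤ) (n o : ℕ), (k, n) ∈ I → (k, o) ∈ I →
      (ball (x (k, n)) (α₃ * r ^ k) ∩ ball (x (k, o)) (α₃ * r ^ k)).Nonempty →
      (Kset I x π (k, n) ∩ Kset I x π (k, o)).Nonempty := by
  intro k n o hn ho hball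
  -- abbreviation for the invariant at step `l`
  set P : ℕ → ℕ × ℕ → Prop := fun l p =>
    (k + (l : ℤ), p.1) ∈ I ∧ (k + (l : ℤ), p.2) ∈ I ∧
      (ball (x (k + (l : ℤ), p.1)) (α₃ * r ^ (k + (l : ℤ))) ∩
        ball (x (k + (l : ℤ), p.2)) (α₃ * r ^ (k + (l : ℤ)))).Nonempty with hP
  have hcast : ∀ l : ℕ, (k + (l : ℤ)) + 1 = k + ((l + 1 : ℕ) : ℤ) := by
    intro l; push_cast; ring
  have key : ∀ (l : ℕ) (p : ℕ × ℕ), P l p → ∃ q : ℕ × ℕ, P (l + 1) q ∧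
      π (k + ((l + 1 : ℕ) : ℤ), q.1) = (k + (l : ℤ), p.1) ∧
      π (k + ((l + 1 : ℕ) : ℤ), q.2) = (k + (l : ℤ), p.2) := by
    intro l p hp
    obtain ⟨h1, h2, h3⟩ := hp
    obtain ⟨m₁, m₂, hm₁, hm₂, hball', hπ₁, hπ₂⟩ := hπ.T4 (k + (l : ℤ)) p.1 p.2 h1 h2 h3
    rw [hcast l] at hm₁ hm₂ hball' hπ₁ hπ₂
    exact ⟨(m₁, m₂), ⟨hm₁, hm₂, hball'⟩, hπ₁, hπ₂⟩
  choose F hF1 hF2 hF3 using key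
  have hbase : P 0 (n, o) := by
    refine ⟨?_, ?_, ?_⟩ <;> simp only [hP, Int.ofNat_zero, add_zero, Nat.cast_zero]
    · exact hn
    · exact ho
    · exact hball
  let G : (l : ℕ) → {p : ℕ × ℕ // P l p} := fun l =>
    Nat.rec (motive := fun l => {p : ℕ × ℕ // P l p}) ⟨(n, o), hbase⟩
      (fun l ih => ⟨F l ih.1 ih.2, hF1 l ih.1 ih.2⟩) l
  set g : ℕ → ℕ × ℕ := fun l => (G l).1 with hg
  have hg0 : g 0 = (n, o) := rfl
  have hgP : ∀ l, P l (g l) := fun l => (G l).2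
  have hgπ1 : ∀ l, π (k + ((l + 1 : ℕ) : ℤ), (g (l + 1)).1) = (k + (l : ℤ), (g l).1) :=
    fun l => hF2 l (G l).1 (G l).2
  have hgπ2 : ∀ l, π (k + ((l + 1 : ℕ) : ℤ), (g (l + 1)).2) = (k + (l : ℤ), (g l).2) :=
    fun l => hF3 l (G l).1 (G l).2
  -- sequences
  set u : ℕ → X := fun l => x (k + (l : ℤ), (g l).1) with hu
  set v : ℕ → X := fun l => x (k + (l : ℤ), (g l).2) with hv
  have hrpow : ∀ l : ℕ, r ^ (k + (l : ℤ)) = r ^ k * r ^ l := by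
    intro l
    rw [zpow_add₀ hr0.ne', zpow_natCast]
  have hr1 : r < 1 := lt_of_le_of_lt hrr₀ hr₀1
  -- iterate identities
  have hit : ∀ l : ℕ, π^[l] (k + (l : ℤ), (g l).1) = (k, n) ∧
      π^[l] (k + (l : ℤ), (g l).2) = (k, o) := by
    intro l
    induction l with
    | zero => simp [hg0]
    | succ l ih =>
      constructor
      · rw [Function.iterate_succ_apply, hgπ1 l, ih.1]
      · rw [Function.iterate_succ_apply, hgπ2 l, ih.2]
  -- Cauchy estimates
  have hdu : ∀ l : ℕ, dist (u l) (u (l + 1)) ≤ (α₁ * r ^ k) * r ^ l := by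
    intro l
    have := hπ.T2 (k + (l : ℤ)) (g (l + 1)).1 (by rw [hcast l]; exact (hgP (l + 1)).1)
    rw [hcast l, hgπ1 l] at this
    rw [dist_comm]
    refine le_of_lt ?_
    calc dist (u (l + 1)) (u l) < α₁ * r ^ (k + (l : ℤ)) := this
    _ = (α₁ * r ^ k) * r ^ l := by rw [hrpow l]; ring
  have hdv : ∀ l : ℕ, dist (v l) (v (l + 1)) ≤ (α₁ * r ^ k) * r ^ l := by
    intro l
    have := hπ.T2 (k + (l : ℤ)) (g (l + 1)).2 (by rw [hcast l]; exact (hgP (l + 1)).2.1)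
    rw [hcast l, hgπ2 l] at this
    rw [dist_comm]
    refine le_of_lt ?_
    calc dist (v (l + 1)) (v l) < α₁ * r ^ (k + (l : ℤ)) := this
    _ = (α₁ * r ^ k) * r ^ l := by rw [hrpow l]; ring
  obtain ⟨p, hp⟩ := cauchySeq_tendsto_of_complete
    (cauchySeq_of_le_geometric r (α₁ * r ^ k) hr1 hdu)
  obtain ⟨q, hq⟩ := cauchySeq_tendsto_of_complete
    (cauchySeq_of_le_geometric r (α₁ * r ^ k) hr1 hdv)
  -- distance between the two sequences tends to 0
  have hduv : ∀ l : ℕ, dist (u l) (v l) ≤ (2 * α₃ * r ^ k) * r ^ l := by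
    intro l
    obtain ⟨y, hy1, hy2⟩ := (hgP l).2.2
    rw [mem_ball] at hy1 hy2
    calc dist (u l) (v l) ≤ dist (u l) y + dist y (v l) := dist_triangle _ _ _
    _ = dist y (u l) + dist y (v l) := by rw [dist_comm]
    _ ≤ α₃ * r ^ (k + (l : ℤ)) + α₃ * r ^ (k + (l : ℤ)) := by
        exact add_le_add hy1.le hy2.le
    _ = (2 * α₃ * r ^ k) * r ^ l := by rw [hrpow l]; ring
  have hpq : p = q := by
    have h1 : Filter.Tendsto (fun l => dist (u l) (v l)) Filter.atTop (nhds (dist p q)) :=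
      hp.dist hq
    have h2 : Filter.Tendsto (fun l => dist (u l) (v l)) Filter.atTop (nhds 0) := by
      apply squeeze_zero (fun l => dist_nonneg) hduv
      have : Filter.Tendsto (fun l : ℕ => r ^ l) Filter.atTop (nhds 0) :=
        tendsto_pow_atTop_nhds_zero_of_lt_one hr0.le hr1
      simpa using this.const_mul (2 * α₃ * r ^ k)
    have := tendsto_nhds_unique h1 h2
    exact eq_of_dist_eq_zero this
  refine ⟨p, ?_, ?_⟩
  · apply mem_closure_of_tendsto hp
    filter_upwards with l
    exact mem_iUnion.2 ⟨l, ⟨(k + (l : ℤ), (g l).1), ⟨(hgP l).1, (hit l).1⟩, rfl⟩⟩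
  · rw [hpq]
    apply mem_closure_of_tendsto hq
    filter_upwards with l
    exact mem_iUnion.2 ⟨l, ⟨(k + (l : ℤ), (g l).2), ⟨(hgP l).2.1, (hit l).2⟩, rfl⟩⟩
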